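/- arXiv:1208.0133 — 3 statements merged into one kernel-verified Lean document; each statement's English description precedes it below -/
import Mathlib

section
/- If a partition P of a finite set S has at least two parts and a partition Q of S has at least two parts, then it is impossible that for every pair of elements x, y of S, x and y lie in the same part of P or in the same part of Q whenever they lie in different parts of the other partition; formally, the relation 'same part of P or same part of Q' cannot hold for all pairs unless one of the partitions is trivial. -/
/-- If two partitions (equivalence relations) `P`, `Q` of a finite set `S` each
have at least two parts (i.e. neither is trivial: for each there is an
unrelated pair), then it cannot be that every pair of elements is in the same
part of `P` or in the same part of `Q`. -/
theorem not_all_pairs_related {S : Type*} [Fintype S]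
    (P Q : Setoid S)
    (hP : ∃ x y : S, ¬ P.r x y) (hQ : ∃ x y : S, ¬ Q.r x y) :
    ¬ (∀ x y : S, P.r x y ∨ Q.r x y) := by
  intro h
  obtain ⟨a, b, hab⟩ := hP
  obtain ⟨c, d, hcd⟩ := hQ
  have hPcd : P.r c d := (h c d).resolve_right hcd
  rcases h a c with hac | hac
  · rcases h b c with hbc | hbc
    · exact hab (P.trans hac (P.symm hbc))
    · rcases h b d with hbd | hbd
      · exact hab (P.trans hac (P.trans hPcd (P.symm hbd)))
      · exact hcd (Q.trans (Q.symm hbc) hbd)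
  · rcases h a d with had | had
    · rcases h b d with hbd | hbd
      · exact hab (P.trans had (P.symm hbd))
      · rcases h b c with hbc | hbc
        · exact hab (P.trans had (P.trans (P.symm hPcd) (P.symm hbc)))
        · exact hcd (Q.trans (Q.symm hbc) hbd)
    · exact hcd (Q.trans (Q.symm hac) had)
end

section
/- A single DCJ operation on a genome changes the number of alternating cycles in the breakpoint graph with any fixed second genome by at most 1; consequently it changes the DCJ distance by at most 1. -/
open Relation

private lemma eqvgen_trans' {α : Type*} {r : α → α → Prop} {a b c : α}
    (h : EqvGen r a b) (g : EqvGen r b c) : EqvGen r a c :=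
  EqvGen.trans a b c h g

private lemma eqvgen_add_pair {α : Type*} {r : α → α → Prop} {a b x y : α}
    (h : EqvGen (fun p q => r p q ∨ (p = a ∧ q = b)) x y) :
    EqvGen r x y ∨ (EqvGen r x a ∧ EqvGen r b y) ∨ (EqvGen r x b ∧ EqvGen r a y) := by
  induction h with
  | rel p q hpq =>
    rcases hpq with h | ⟨rfl, rfl⟩
    · exact Or.inl (EqvGen.rel _ _ h)
    · exact Or.inr (Or.inl ⟨EqvGen.refl _, EqvGen.refl _⟩)
  | refl p => exact Or.inl (EqvGen.refl p)
  | symm p q _ ih =>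
    rcases ih with h | ⟨h1, h2⟩ | ⟨h1, h2⟩
    · exact Or.inl h.symm
    · exact Or.inr (Or.inr ⟨h2.symm, h1.symm⟩)
    · exact Or.inr (Or.inl ⟨h2.symm, h1.symm⟩)
  | trans p q s _ _ ih1 ih2 =>
    rcases ih1 with h | ⟨h1, h2⟩ | ⟨h1, h2⟩ <;>
      rcases ih2 with g | ⟨g1, g2⟩ | ⟨g1, g2⟩
    · exact Or.inl (eqvgen_trans' h g)
    · exact Or.inr (Or.inl ⟨eqvgen_trans' h g1, g2⟩)
    · exact Or.inr (Or.inr ⟨eqvgen_trans' h g1, g2⟩)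
    · exact Or.inr (Or.inl ⟨h1, eqvgen_trans' h2 g⟩)
    · exact Or.inr (Or.inl ⟨h1, g2⟩)
    · exact Or.inl (eqvgen_trans' h1 g2)
    · exact Or.inr (Or.inr ⟨h1, eqvgen_trans' h2 g⟩)
    · exact Or.inl (eqvgen_trans' h1 g2)
    · exact Or.inr (Or.inr ⟨h1, g2⟩)

private lemma card_le_of_imp {α : Type*} [Finite α] {r s : α → α → Prop}
    (h : ∀ a b, r a b → EqvGen s a b) :
    Nat.card (Quotient (EqvGen.setoid s)) ≤ Nat.card (Quotient (EqvGen.setoid r)) := by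
  have hle : ∀ a b, EqvGen r a b → EqvGen s a b := by
    intro a b hab
    have := Relation.EqvGen.mono h a b hab
    rwa [Equivalence.eqvGen_iff (Relation.EqvGen.is_equivalence s)] at this
  refine Nat.card_le_card_of_surjective
    (Quotient.map' id (fun a b hab => hle a b hab)) ?_
  intro q
  obtain ⟨a, rfl⟩ := Quotient.exists_rep q
  exact ⟨Quotient.mk'' a, rfl⟩

open Classical in
private lemma card_add_pair {α : Type*} [Finite α] (r : α → α → Prop) (a b : α) :
    Nat.card (Quotient (EqvGen.setoid r)) ≤
      Nat.card (Quotient (EqvGen.setoid (fun p q => r p q ∨ (p = a ∧ q = b)))) + 1 := by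
  set t : α → α → Prop := fun p q => r p q ∨ (p = a ∧ q = b) with ht
  have hle : ∀ p q, EqvGen r p q → EqvGen t p q := fun p q h =>
    Relation.EqvGen.mono (fun p q hpq => Or.inl hpq) p q h
  let φ : Quotient (EqvGen.setoid r) → Quotient (EqvGen.setoid t) :=
    Quotient.map' id (fun p q h => hle p q h)
  let f : Quotient (EqvGen.setoid r) → Quotient (EqvGen.setoid t) ⊕ Unit :=
    fun q => if q = Quotient.mk (EqvGen.setoid r) a then Sum.inr () else Sum.inl (φ q)
  have hf : Function.Injective f := by
    intro q1 q2 hq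
    by_cases h1 : q1 = Quotient.mk (EqvGen.setoid r) a <;>
      by_cases h2 : q2 = Quotient.mk (EqvGen.setoid r) a
    · rw [h1, h2]
    · simp only [f, if_pos h1, if_neg h2] at hq; exact absurd hq (by simp)
    · simp only [f, if_neg h1, if_pos h2] at hq; exact absurd hq (by simp)
    · simp only [f, if_neg h1, if_neg h2, Sum.inl.injEq] at hq
      obtain ⟨p, rfl⟩ := Quotient.exists_rep q1
      obtain ⟨q, rfl⟩ := Quotient.exists_rep q2
      have hpq : EqvGen t p q := Quotient.exact' hq
      rcases eqvgen_add_pair hpq with h | ⟨g1, g2⟩ | ⟨g1, g2⟩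
      · exact Quotient.sound' h
      · exact absurd (Quotient.sound' g1) h1
      · exact absurd (Quotient.sound' g2.symm) h2
  calc Nat.card (Quotient (EqvGen.setoid r))
      ≤ Nat.card (Quotient (EqvGen.setoid t) ⊕ Unit) := Nat.card_le_card_of_injective f hf
    _ = Nat.card (Quotient (EqvGen.setoid t)) + 1 := by simp [Nat.card_sum]

private lemma aux {n : ℕ} (σ σ' τ : Equiv.Perm (Fin (2 * n)))
    (hσ : ∀ z, σ (σ z) = z) (hσ'2 : ∀ z, σ' (σ' z) = z)
    (x y u v : Fin (2 * n))
    (hxy : σ x = y) (huv : σ u = v)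
    (h1 : σ' x = u) (h2 : σ' y = v)
    (hrest : ∀ z, z ≠ x → z ≠ y → z ≠ u → z ≠ v → σ' z = σ z) :
    Nat.card (Quotient (EqvGen.setoid (fun a b => σ' a = b ∨ τ a = b))) ≤
      Nat.card (Quotient (EqvGen.setoid (fun a b => σ a = b ∨ τ a = b))) + 1 := by
  set r : Fin (2 * n) → Fin (2 * n) → Prop := fun a b => σ a = b ∨ τ a = b with hr
  set r' : Fin (2 * n) → Fin (2 * n) → Prop := fun a b => σ' a = b ∨ τ a = b with hr'
  set t : Fin (2 * n) → Fin (2 * n) → Prop :=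
    fun p q => r' p q ∨ (p = x ∧ q = y) with htdef
  have step1 : Nat.card (Quotient (EqvGen.setoid r')) ≤
      Nat.card (Quotient (EqvGen.setoid t)) + 1 := card_add_pair r' x y
  have step2 : Nat.card (Quotient (EqvGen.setoid t)) ≤
      Nat.card (Quotient (EqvGen.setoid r)) := by
    apply card_le_of_imp
    intro a b hab
    rcases hab with hab | hab
    · -- σ a = b
      have e1 : EqvGen t u x :=
        EqvGen.rel u x (Or.inl (Or.inl (by rw [← h1, hσ'2])))
      have e2 : EqvGen t x y := EqvGen.rel x y (Or.inr ⟨rfl, rfl⟩)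
      have e3 : EqvGen t y v := EqvGen.rel y v (Or.inl (Or.inl h2))
      by_cases hax : a = x
      · have hb : b = y := by rw [← hab, hax, hxy]
        rw [hax, hb]; exact e2
      by_cases hay : a = y
      · have hb : b = x := by rw [← hab, hay, ← hxy, hσ]
        rw [hay, hb]; exact e2.symm
      by_cases hau : a = u
      · have hb : b = v := by rw [← hab, hau, huv]
        rw [hau, hb]
        exact eqvgen_trans' (eqvgen_trans' e1 e2) e3
      by_cases hav : a = v
      · have hb : b = u := by rw [← hab, hav, ← huv, hσ]
        rw [hav, hb]
        exact (eqvgen_trans' (eqvgen_trans' e1 e2) e3).symm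
      · exact EqvGen.rel _ _ (Or.inl (Or.inl (by rw [hrest a hax hay hau hav]; exact hab)))
    · exact EqvGen.rel _ _ (Or.inl (Or.inr hab))
  exact le_trans step1 (Nat.add_le_add_right step2 1)

/-- Genomes on `n` genes are perfect matchings (fixpoint-free involutions) on
the `2n` extremities.  Suppose `σ'` is obtained from the genome `σ` by a single
DCJ: two `σ`-edges `{x,y}` and `{u,v}` are replaced by either `{x,u},{y,v}` or
`{x,v},{y,u}`, all other edges being unchanged.  Then for any fixed genome `τ`,
the number of alternating cycles `c` in the breakpoint graph (number of classes
of the equivalence generated by `a ~ σ a`, `a ~ τ a`) changes by at most `1`;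
consequently the DCJ distance `d = n − c` changes by at most `1`. -/
theorem dcj_changes_cycles_by_at_most_one (n : ℕ)
    (σ σ' τ : Equiv.Perm (Fin (2 * n)))
    (hσ : ∀ z, σ (σ z) = z) (hσ' : ∀ z, σ z ≠ z)
    (hσ'2 : ∀ z, σ' (σ' z) = z) (hσ'3 : ∀ z, σ' z ≠ z)
    (hτ : ∀ z, τ (τ z) = z) (hτ' : ∀ z, τ z ≠ z)
    (x y u v : Fin (2 * n))
    (hxy : σ x = y) (huv : σ u = v)
    (hxu : x ≠ u) (hxv : x ≠ v) (hyu : y ≠ u) (hyv : y ≠ v)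
    (hdcj : (σ' x = u ∧ σ' y = v) ∨ (σ' x = v ∧ σ' y = u))
    (hrest : ∀ z, z ≠ x → z ≠ y → z ≠ u → z ≠ v → σ' z = σ z) :
    |(Nat.card (Quotient (Relation.EqvGen.setoid
        (fun a b => σ' a = b ∨ τ a = b))) : ℤ) -
      (Nat.card (Quotient (Relation.EqvGen.setoid
        (fun a b => σ a = b ∨ τ a = b))) : ℤ)| ≤ 1 ∧
    |((n : ℤ) - Nat.card (Quotient (Relation.EqvGen.setoid
        (fun a b => σ' a = b ∨ τ a = b)))) -
      ((n : ℤ) - Nat.card (Quotient (Relation.EqvGen.setoid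
        (fun a b => σ a = b ∨ τ a = b))))| ≤ 1 := by
  set c' := Nat.card (Quotient (Relation.EqvGen.setoid
      (fun a b => σ' a = b ∨ τ a = b))) with hc'
  set c := Nat.card (Quotient (Relation.EqvGen.setoid
      (fun a b => σ a = b ∨ τ a = b))) with hc
  have key : c' ≤ c + 1 ∧ c ≤ c' + 1 := by
    rcases hdcj with ⟨h1, h2⟩ | ⟨h1, h2⟩
    · constructor
      · exact aux σ σ' τ hσ hσ'2 x y u v hxy huv h1 h2 hrest
      · exact aux σ' σ τ hσ'2 hσ x u y v h1 h2 hxy huv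
          (fun z g1 g2 g3 g4 => (hrest z g1 g3 g2 g4).symm)
    · constructor
      · exact aux σ σ' τ hσ hσ'2 x y v u hxy (by rw [← huv, hσ]) h1 h2
          (fun z g1 g2 g3 g4 => hrest z g1 g2 g4 g3)
      · exact aux σ' σ τ hσ'2 hσ x v y u h1 h2 hxy (by rw [← huv, hσ])
          (fun z g1 g2 g3 g4 => (hrest z g1 g3 g4 g2).symm)
  obtain ⟨k1, k2⟩ := key
  constructor
  · rw [abs_le]; omega
  · rw [abs_le]; constructor <;> push_cast <;> omega
end

section
/- If A, B, C are three genomes on n genes with d(A,B) < n−1 and d(A,C) < n−1, then there exist two A-edges lying in two distinct AB-cycles and simultaneously in two distinct AC-cycles of the breakpoint graph BG(A,B,C). -/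
lemma sep_both {α : Type*} {R S : α → α → Prop}
    (hR : Equivalence R) (hS : Equivalence S)
    {a b : α} (hab : ¬ R a b) {c d : α} (hcd : ¬ S c d) :
    ∃ p q, ¬ R p q ∧ ¬ S p q := by
  by_cases h1 : S a b
  · have he : ¬ S a c ∨ ¬ S a d := by
      by_contra h
      push_neg at h
      exact hcd (hS.trans (hS.symm h.1) h.2)
    obtain ⟨e, hae⟩ : ∃ e, ¬ S a e := he.elim (fun h => ⟨c, h⟩) (fun h => ⟨d, h⟩)
    have hbe : ¬ S b e := fun h => hae (hS.trans h1 h)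
    by_cases h2 : R a e
    · exact ⟨b, e, fun h => hab (hR.trans h2 (hR.symm h)), hbe⟩
    · exact ⟨a, e, h2, hae⟩
  · exact ⟨a, b, hab, h1⟩

lemma exists_not_eqvgen {α : Type*} [Finite α] (r : α → α → Prop)
    (h : 1 < Nat.card (Quotient (Relation.EqvGen.setoid r))) :
    ∃ a b, ¬ Relation.EqvGen r a b := by
  rw [Finite.one_lt_card_iff_nontrivial] at h
  obtain ⟨x, y, hxy⟩ := h
  obtain ⟨a, rfl⟩ := Quotient.exists_rep x
  obtain ⟨b, rfl⟩ := Quotient.exists_rep y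
  exact ⟨a, b, fun h => hxy (Quotient.sound h)⟩

/-- Let `A, B, C` be genomes on `n` genes, i.e. perfect matchings
(fixpoint-free involutions `σA, σB, σC`) on the `2n` extremities, with
`d(A,B) < n−1` and `d(A,C) < n−1`, where `d(A,B) = n − c(A,B)` and `c(A,B)` is
the number of `AB`-cycles, i.e. of classes of the equivalence relation
generated by `a ~ σA a`, `a ~ σB a` (similarly for `AC`).  Then there exist
two `A`-edges (represented by endpoints `a, b`, the edges being `{a, σA a}`
and `{b, σA b}`) lying in two distinct `AB`-cycles and simultaneously in two
distinct `AC`-cycles of the breakpoint graph `BG(A,B,C)`. -/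
theorem exists_pair_of_A_edges (n : ℕ)
    (σA σB σC : Equiv.Perm (Fin (2 * n)))
    (hA : ∀ z, σA (σA z) = z) (hA' : ∀ z, σA z ≠ z)
    (hB : ∀ z, σB (σB z) = z) (hB' : ∀ z, σB z ≠ z)
    (hC : ∀ z, σC (σC z) = z) (hC' : ∀ z, σC z ≠ z)
    (hdAB : (n : ℤ) - Nat.card (Quotient (Relation.EqvGen.setoid
        (fun a b => σA a = b ∨ σB a = b))) < (n : ℤ) - 1)
    (hdAC : (n : ℤ) - Nat.card (Quotient (Relation.EqvGen.setoid
        (fun a b => σA a = b ∨ σC a = b))) < (n : ℤ) - 1) :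
    ∃ a b : Fin (2 * n),
      ¬ Relation.EqvGen (fun s t => σA s = t ∨ σB s = t) a b ∧
      ¬ Relation.EqvGen (fun s t => σA s = t ∨ σC s = t) a b := by
  have h1 : 1 < Nat.card (Quotient (Relation.EqvGen.setoid
      (fun a b : Fin (2 * n) => σA a = b ∨ σB a = b))) := by omega
  have h2 : 1 < Nat.card (Quotient (Relation.EqvGen.setoid
      (fun a b : Fin (2 * n) => σA a = b ∨ σC a = b))) := by omega
  obtain ⟨a, b, hab⟩ := exists_not_eqvgen _ h1
  obtain ⟨c, d, hcd⟩ := exists_not_eqvgen _ h2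
  obtain ⟨p, q, hpq⟩ := sep_both (Relation.EqvGen.is_equivalence _)
    (Relation.EqvGen.is_equivalence _) hab hcd
  exact ⟨p, q, hpq⟩
end
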